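/- arXiv:1605.00165 — 2 statements merged into one kernel-verified Lean document; each statement's English description precedes it below -/
import Mathlib

section
/- Let s ≥ 1, let a₁,…,a_s be positive real numbers linearly independent over ℚ, and let G = {Σ_{i=1}^s m_i a_i : m_i ∈ ℤ}. Let b > 0 and let μ = δ_{bℤ} = Σ_{k∈ℤ} δ_{bk}. Then there exist constants A, B > 0 such that μ ∈ 𝓕(G,A,B) if and only if 1/b does not belong to the ℚ-linear span of a₁,…,a_s; and in that case μ ∈ 𝓕(G, 1/b, 1/b). -/
open MeasureTheory Filter Real Complex
open scoped ENNReal NNReal Topology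

noncomputable section

/-- The interval `Q_ε = [-ε/2, ε/2]`. -/
def QI (ε : ℝ) : Set ℝ := Set.Icc (-(ε / 2)) (ε / 2)

/-- The Fourier transform `f̂(ξ) = ∫ f(x) e^{-2πi ξx} dx` on `ℝ`. -/
def Ft1 (f : ℝ → ℂ) (ξ : ℝ) : ℂ :=
  ∫ x : ℝ, Complex.exp (-2 * (π : ℂ) * Complex.I * ((ξ * x : ℝ) : ℂ)) * f x

/-- The squared `L²`-norm `‖f‖₂²`. -/
def l2sq1 (f : ℝ → ℂ) : ℝ≥0∞ := ∫⁻ x, (‖f x‖₊ : ℝ≥0∞) ^ 2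

/-- `f ∈ L²(E)`: square-integrable and vanishing a.e. outside `E`. -/
def MemL2On1 (f : ℝ → ℂ) (E : Set ℝ) : Prop :=
  AEStronglyMeasurable f (volume : Measure ℝ) ∧ l2sq1 f < ⊤ ∧ ∀ᵐ x : ℝ, x ∉ E → f x = 0

/-- `μ ∈ 𝓑(S,B)`: uniform Bessel measure for the set `S` with limiting upper bound `≤ B`. -/
def UniformBessel (μ : Measure ℝ) (S : Set ℝ) (B : ℝ) : Prop :=
  ∀ (M : ℕ) (x : Fin M → ℝ), (∀ j, x j ∈ S) → Function.Injective x →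
    ∀ δ : ℝ, 0 < δ → ∃ ε : ℝ, 0 < ε ∧
      Pairwise (Function.onFun Disjoint fun j => (x j + ·) '' QI ε) ∧
      ∀ f : ℝ → ℂ, MemL2On1 f (⋃ j, (x j + ·) '' QI ε) →
        (∫⁻ ξ, (‖Ft1 f ξ‖₊ : ℝ≥0∞) ^ 2 ∂μ) ≤ ENNReal.ofReal (B + δ) * l2sq1 f

/-- `μ ∈ 𝓕(S,A,B)`: uniform frame measure for the set `S` with limiting lower bound `≥ A`
and limiting upper bound `≤ B`. -/
def UniformFrame (μ : Measure ℝ) (S : Set ℝ) (A B : ℝ) : Prop :=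
  ∀ (M : ℕ) (x : Fin M → ℝ), (∀ j, x j ∈ S) → Function.Injective x →
    ∀ δ : ℝ, 0 < δ → ∃ ε : ℝ, 0 < ε ∧
      Pairwise (Function.onFun Disjoint fun j => (x j + ·) '' QI ε) ∧
      ∀ f : ℝ → ℂ, MemL2On1 f (⋃ j, (x j + ·) '' QI ε) →
        ENNReal.ofReal (A - δ) * l2sq1 f ≤ (∫⁻ ξ, (‖Ft1 f ξ‖₊ : ℝ≥0∞) ^ 2 ∂μ) ∧
        (∫⁻ ξ, (‖Ft1 f ξ‖₊ : ℝ≥0∞) ^ 2 ∂μ) ≤ ENNReal.ofReal (B + δ) * l2sq1 f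

/-- The upper Beurling density `D⁺(ν) = limsup_{h→∞} sup_{t} ν(t+[-h/2,h/2])/h`. -/
def uD1 (ν : Measure ℝ) : ℝ≥0∞ :=
  Filter.limsup (fun h : ℝ => ⨆ t : ℝ, ν (Set.Icc (t - h / 2) (t + h / 2)) /
    ENNReal.ofReal h) atTop

/-- The lower Beurling density `D⁻(ν) = liminf_{h→∞} inf_{t} ν(t+[-h/2,h/2])/h`. -/
def lD1 (ν : Measure ℝ) : ℝ≥0∞ :=
  Filter.liminf (fun h : ℝ => ⨅ t : ℝ, ν (Set.Icc (t - h / 2) (t + h / 2)) /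
    ENNReal.ofReal h) atTop

/-- The subgroup of `ℝ` generated by `a₁,…,a_s`. -/
def Gset (s : ℕ) (a : Fin s → ℝ) : Set ℝ :=
  {x | ∃ m : Fin s → ℤ, x = ∑ i, (m i : ℝ) * a i}

namespace LatAux

open Set AddCircle

lemma rpow_two_eq (x : ℝ≥0∞) : x ^ (2:ℝ) = x ^ (2:ℕ) := by
  rw [show (2:ℝ) = ((2:ℕ):ℝ) by norm_num, ENNReal.rpow_natCast]

lemma memLp_two {α : Type*} [MeasurableSpace α] {μ : Measure α} {g : α → ℂ}
    (hm : AEStronglyMeasurable g μ) (h : (∫⁻ x, (‖g x‖₊ : ℝ≥0∞) ^ 2 ∂μ) < ⊤) :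
    MemLp g 2 μ := by
  refine ⟨hm, ?_⟩
  rw [eLpNorm_eq_lintegral_rpow_enorm_toReal two_ne_zero ENNReal.ofNat_ne_top]
  have h2 : (2:ℝ≥0∞).toReal = 2 := by simp
  rw [h2]
  simp_rw [rpow_two_eq]
  exact ENNReal.rpow_lt_top_of_nonneg (by norm_num) h.ne

lemma nnnorm_sq_eq (z : ℂ) : (‖z‖₊ : ℝ≥0∞) ^ 2 = ENNReal.ofReal (‖z‖ ^ 2) := by
  rw [ENNReal.ofReal_pow (norm_nonneg _), ofReal_norm, enorm_eq_nnnorm]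

lemma ofReal_int_sq {α : Type*} [MeasurableSpace α] {μ : Measure α} {g : α → ℂ}
    (hmem : MemLp g 2 μ) :
    ENNReal.ofReal (∫ x, ‖g x‖ ^ 2 ∂μ) = ∫⁻ x, (‖g x‖₊ : ℝ≥0∞) ^ 2 ∂μ := by
  have hint : Integrable (fun x => ‖g x‖ ^ 2) μ := by
    have := hmem.integrable_norm_rpow two_ne_zero ENNReal.ofNat_ne_top
    simpa [rpow_natCast] using this
  rw [ofReal_integral_eq_lintegral_ofReal hint
    (Filter.Eventually.of_forall fun x => by positivity)]
  exact lintegral_congr fun x => (nnnorm_sq_eq _).symm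

lemma parseval_key {b : ℝ} (hb : 0 < b) (c : ℝ) (g : ℝ → ℂ)
    (hmeas : StronglyMeasurable g) (hfin : l2sq1 g < ⊤)
    (hsupp : ∀ x, x ∉ Set.Ioc c (c + 1/b) → g x = 0) :
    ∑' k : ℤ, (‖Ft1 g (b * k)‖₊ : ℝ≥0∞) ^ 2 = ENNReal.ofReal (1/b) * l2sq1 g := by
  set T : ℝ := 1/b with hTdef
  have hT : 0 < T := by positivity
  haveI : Fact (0 < T) := ⟨hT⟩
  set G : AddCircle T → ℂ := AddCircle.liftIoc T c g with hGdef
  have hGmeas : Measurable G :=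
    hmeas.measurable.comp (measurable_subtype_coe.comp
      (AddCircle.measurableEquivIoc T c).measurable)
  have hGsm : StronglyMeasurable G := hGmeas.stronglyMeasurable
  -- transfer the L² norm
  have key0 : (∫⁻ z, (‖G z‖₊ : ℝ≥0∞) ^ 2 ∂(volume : Measure (AddCircle T))) = l2sq1 g := by
    have h1 := (AddCircle.measurePreserving_mk T c).lintegral_comp
      (f := fun z => (‖G z‖₊ : ℝ≥0∞) ^ 2) (hGmeas.nnnorm.coe_nnreal_ennreal.pow_const 2)
    rw [← h1]
    have h2 : (∫⁻ x in Set.Ioc c (c + T), (‖G (↑x : AddCircle T)‖₊ : ℝ≥0∞) ^ 2)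
        = ∫⁻ x in Set.Ioc c (c + T), (‖g x‖₊ : ℝ≥0∞) ^ 2 := by
      refine setLIntegral_congr_fun measurableSet_Ioc ?_
      intro x hx
      beta_reduce
      rw [hGdef, AddCircle.liftIoc_coe_apply hx]
    rw [h2]
    unfold l2sq1
    rw [← lintegral_indicator measurableSet_Ioc]
    refine lintegral_congr fun x => ?_
    by_cases hx : x ∈ Set.Ioc c (c + T)
    · simp [hx]
    · simp [hx, hsupp x hx]
  have hG2vol : (∫⁻ z, (‖G z‖₊ : ℝ≥0∞) ^ 2 ∂(volume : Measure (AddCircle T))) < ⊤ := by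
    rw [key0]; exact hfin
  have hvol : (volume : Measure (AddCircle T)) = ENNReal.ofReal T • haarAddCircle :=
    AddCircle.volume_eq_smul_haarAddCircle
  have hG2haar : (∫⁻ z, (‖G z‖₊ : ℝ≥0∞) ^ 2 ∂(haarAddCircle : Measure (AddCircle T))) < ⊤ := by
    by_contra htop
    push_neg at htop
    have : (∫⁻ z, (‖G z‖₊ : ℝ≥0∞) ^ 2
        ∂(haarAddCircle : Measure (AddCircle T))) = ⊤ := top_le_iff.mp htop
    rw [hvol, lintegral_smul_measure, this, smul_eq_mul, ENNReal.mul_top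
      (ENNReal.ofReal_pos.mpr hT).ne'] at hG2vol
    exact (lt_irrefl _ hG2vol).elim
  have hGmem : MemLp G 2 (haarAddCircle : Measure (AddCircle T)) :=
    memLp_two hGsm.aestronglyMeasurable hG2haar
  -- the coefficient identity
  have hcoeff : ∀ n : ℤ, Ft1 g (b * n) = (T : ℂ) * fourierCoeff G n := by
    intro n
    rw [hGdef, fourierCoeff_liftIoc_eq, fourierCoeffOn_eq_integral]
    have hle : c ≤ c + T := by linarith
    have e1 : Ft1 g (b * n)
        = ∫ x in Set.Ioc c (c + T),
            Complex.exp (-2 * (π : ℂ) * Complex.I * ((b * n * x : ℝ) : ℂ)) * g x := by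
      rw [Ft1, ← setIntegral_eq_integral_of_forall_compl_eq_zero
        (fun x hx => by rw [hsupp x hx, mul_zero])]
    have e2 : (∫ x in c..(c + T), fourier (-n) (x : AddCircle (c + T - c)) • g x)
        = ∫ x in Set.Ioc c (c + T),
            Complex.exp (-2 * (π : ℂ) * Complex.I * ((b * n * x : ℝ) : ℂ)) * g x := by
      rw [intervalIntegral.integral_of_le hle]
      refine setIntegral_congr_fun measurableSet_Ioc fun x hx => ?_
      rw [fourier_coe_apply, smul_eq_mul]
      congr 2
      have hb' : (b : ℂ) ≠ 0 := Complex.ofReal_ne_zero.mpr hb.ne'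
      rw [add_sub_cancel_left]
      push_cast [hTdef]
      field_simp
    rw [e2, e1, add_sub_cancel_left, real_smul, ← mul_assoc,
      show ((T:ℂ) * ((1/T : ℝ) : ℂ)) = 1 by
        push_cast
        rw [mul_one_div, div_self (Complex.ofReal_ne_zero.mpr hT.ne')],
      one_mul]
  -- Parseval
  set F : Lp ℂ 2 (haarAddCircle : Measure (AddCircle T)) := hGmem.toLp G with hF
  have hFae : (F : AddCircle T → ℂ) =ᵐ[haarAddCircle] G := hGmem.coeFn_toLp
  have hco : ∀ n : ℤ, fourierCoeff (F : AddCircle T → ℂ) n = fourierCoeff G n := by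
    intro n
    simp only [fourierCoeff]
    refine integral_congr_ae ?_
    filter_upwards [hFae] with t ht
    rw [ht]
  have hL2 : (∫ t, ‖(F : AddCircle T → ℂ) t‖ ^ 2 ∂haarAddCircle)
      = ∫ t, ‖G t‖ ^ 2 ∂haarAddCircle := by
    refine integral_congr_ae ?_
    filter_upwards [hFae] with t ht
    rw [ht]
  have hpars : ∑' n : ℤ, ‖fourierCoeff G n‖ ^ 2 = ∫ t, ‖G t‖ ^ 2 ∂haarAddCircle := by
    have := tsum_sq_fourierCoeff F
    simp_rw [hco] at this
    rw [hL2] at this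
    exact this
  have hsummable : Summable fun n : ℤ => ‖fourierCoeff G n‖ ^ 2 := by
    have h1 := (lp.memℓp (fourierBasis.repr F)).summable
      (by norm_num : 0 < (2:ℝ≥0∞).toReal)
    exact h1.congr fun n => by
      rw [fourierBasis_repr, hco, show ((2:ℝ≥0∞).toReal) = ((2:ℕ):ℝ) from by norm_num,
        Real.rpow_natCast]
  -- assemble
  have hnormT : ‖(T : ℂ)‖ = T := by
    rw [Complex.norm_real, Real.norm_eq_abs, abs_of_pos hT]
  have hFt : ∀ n : ℤ, ‖Ft1 g (b * n)‖ ^ 2 = T ^ 2 * ‖fourierCoeff G n‖ ^ 2 := by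
    intro n
    rw [hcoeff n, norm_mul, hnormT, mul_pow]
  have hsum2 : Summable fun n : ℤ => ‖Ft1 g (b * n)‖ ^ 2 := by
    simp_rw [hFt]
    exact hsummable.mul_left _
  calc ∑' k : ℤ, (‖Ft1 g (b * k)‖₊ : ℝ≥0∞) ^ 2
      = ∑' k : ℤ, ENNReal.ofReal (‖Ft1 g (b * k)‖ ^ 2) := by
        simp_rw [nnnorm_sq_eq]
    _ = ENNReal.ofReal (∑' k : ℤ, ‖Ft1 g (b * k)‖ ^ 2) :=
        (ENNReal.ofReal_tsum_of_nonneg (fun n => by positivity) hsum2).symm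
    _ = ENNReal.ofReal (T ^ 2 * ∫ t, ‖G t‖ ^ 2 ∂haarAddCircle) := by
        rw [← hpars, ← tsum_mul_left]
        congr 1
        exact tsum_congr hFt
    _ = ENNReal.ofReal (T ^ 2) * ENNReal.ofReal (∫ t, ‖G t‖ ^ 2 ∂haarAddCircle) :=
        ENNReal.ofReal_mul (by positivity)
    _ = ENNReal.ofReal (T ^ 2) * ∫⁻ z, (‖G z‖₊ : ℝ≥0∞) ^ 2 ∂haarAddCircle := by
        rw [ofReal_int_sq hGmem]
    _ = ENNReal.ofReal T * l2sq1 g := by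
        rw [← key0, hvol, lintegral_smul_measure, smul_eq_mul]
        rw [show ENNReal.ofReal (T ^ 2) = ENNReal.ofReal T * ENNReal.ofReal T by
          rw [← ENNReal.ofReal_mul hT.le]; ring_nf]
        ring

lemma exp_unit (r : ℝ) : ‖Complex.exp (-2 * (π : ℂ) * Complex.I * (r : ℂ))‖ = 1 := by
  rw [Complex.norm_exp]
  have : (-2 * (π : ℂ) * Complex.I * (r : ℂ)).re = 0 := by
    simp [Complex.mul_re, Complex.mul_im]
    try ring
  rw [this, Real.exp_zero]

lemma exp_int (m : ℤ) : Complex.exp (-2 * (π : ℂ) * Complex.I * ((m : ℝ) : ℂ)) = 1 := by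
  rw [show (-2 * (π : ℂ) * Complex.I * ((m : ℝ) : ℂ)) = ((-m : ℤ) : ℂ) * (2 * (π:ℂ) * Complex.I) by
    push_cast; ring]
  exact Complex.exp_int_mul_two_pi_mul_I (-m)

lemma integrableOn_Icc_of_l2 {f : ℝ → ℂ} (hm : AEStronglyMeasurable f volume)
    (hfin : l2sq1 f < ⊤) (u v : ℝ) : IntegrableOn f (Set.Icc u v) volume := by
  have hmem : MemLp f 2 (volume : Measure ℝ) := memLp_two hm hfin
  have : IsFiniteMeasure ((volume : Measure ℝ).restrict (Set.Icc u v)) := by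
    constructor
    rw [Measure.restrict_apply_univ]
    exact measure_Icc_lt_top
  exact (hmem.restrict (Set.Icc u v)).integrable one_le_two

lemma transfer {M : ℕ} (x y : Fin M → ℝ) (d : Fin M → ℤ) (T ε b : ℝ)
    (hε : 0 < ε) (hT : 0 < T) (hbT : b * T = 1)
    (hxy : ∀ j, y j = x j - T * d j)
    (hJd : Pairwise (Function.onFun Disjoint fun j => Set.Icc (y j - ε/2) (y j + ε/2)))
    (f : ℝ → ℂ) (hsm : StronglyMeasurable f) (hfin : l2sq1 f < ⊤)
    (hsupp : ∀ᵐ t : ℝ, t ∉ (⋃ j, Set.Icc (x j - ε/2) (x j + ε/2)) → f t = 0)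
    (hId : Pairwise (Function.onFun Disjoint fun j => Set.Icc (x j - ε/2) (x j + ε/2))) :
    ∃ g : ℝ → ℂ, StronglyMeasurable g ∧ l2sq1 g = l2sq1 f ∧
      (∀ t, (∀ j, t ∉ Set.Icc (y j - ε/2) (y j + ε/2)) → g t = 0) ∧
      ∀ k : ℤ, Ft1 g (b * k) = Ft1 f (b * k) := by
  classical
  set J : Fin M → Set ℝ := fun j => Set.Icc (y j - ε/2) (y j + ε/2) with hJ
  set I : Fin M → Set ℝ := fun j => Set.Icc (x j - ε/2) (x j + ε/2) with hI
  set g : ℝ → ℂ := fun t => ∑ j, (J j).indicator (fun t => f (t + T * d j)) t with hg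
  have hpre : ∀ j, (fun t : ℝ => t + T * (d j : ℝ)) ⁻¹' (I j) = J j := by
    intro j
    rw [hI, hJ]
    simp only [Set.preimage_add_const_Icc]
    have h1 : x j - ε/2 - T * d j = y j - ε/2 := by rw [hxy]; ring
    have h2 : x j + ε/2 - T * d j = y j + ε/2 := by rw [hxy]; ring
    rw [h1, h2]
  have hgsm : StronglyMeasurable g := by
    apply Finset.stronglyMeasurable_fun_sum
    intro j _
    exact (hsm.comp_measurable (measurable_add_const _)).indicator measurableSet_Icc
  refine ⟨g, hgsm, ?_, ?_, ?_⟩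
  · -- l2 norms agree
    have hptwise : ∀ t, (‖g t‖₊ : ℝ≥0∞) ^ 2
        = ∑ j, (J j).indicator (fun t => (‖f (t + T * d j)‖₊ : ℝ≥0∞) ^ 2) t := by
      intro t
      by_cases hex : ∃ j, t ∈ J j
      · obtain ⟨j0, hj0⟩ := hex
        have huniq : ∀ j, j ≠ j0 → t ∉ J j := fun j hj hmem =>
          Set.disjoint_left.mp (hJd hj) hmem hj0
        have hgt : g t = f (t + T * d j0) := by
          simp only [hg]
          rw [Finset.sum_eq_single j0
            (fun j _ hj => Set.indicator_of_notMem (huniq j hj) _)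
            (fun h => absurd (Finset.mem_univ j0) h)]
          exact Set.indicator_of_mem hj0 _
        rw [hgt, Finset.sum_eq_single j0
          (fun j _ hj => Set.indicator_of_notMem (huniq j hj) _)
          (fun h => absurd (Finset.mem_univ j0) h),
          Set.indicator_of_mem hj0]
      · push_neg at hex
        have hgt : g t = 0 := by
          simp only [hg]
          exact Finset.sum_eq_zero fun j _ => Set.indicator_of_notMem (hex j) _
        rw [hgt]
        rw [Finset.sum_eq_zero fun j _ => Set.indicator_of_notMem (hex j) _]
        simp
    have hmb : ∀ j : Fin M, Measurable fun t => (‖f (t + T * (d j : ℝ))‖₊ : ℝ≥0∞) ^ 2 :=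
      fun j => ((hsm.measurable.comp (measurable_add_const _)).nnnorm.coe_nnreal_ennreal).pow_const 2
    calc l2sq1 g = ∫⁻ t, ∑ j, (J j).indicator (fun t => (‖f (t + T * d j)‖₊ : ℝ≥0∞) ^ 2) t := by
          unfold l2sq1
          exact lintegral_congr hptwise
      _ = ∑ j, ∫⁻ t, (J j).indicator (fun t => (‖f (t + T * d j)‖₊ : ℝ≥0∞) ^ 2) t := by
          exact lintegral_finset_sum _ fun j _ => ((hmb j).indicator measurableSet_Icc)
      _ = ∑ j, ∫⁻ t in I j, (‖f t‖₊ : ℝ≥0∞) ^ 2 := by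
          refine Finset.sum_congr rfl fun j _ => ?_
          have e1 : ∀ t : ℝ, (J j).indicator (fun t => (‖f (t + T * d j)‖₊ : ℝ≥0∞) ^ 2) t
              = ((I j).indicator (fun u => (‖f u‖₊ : ℝ≥0∞) ^ 2)) (t + T * d j) := by
            intro t
            rw [← hpre j]
            exact Set.indicator_comp_right (fun t : ℝ => t + T * (d j : ℝ))
              (s := I j) (g := fun u => (‖f u‖₊ : ℝ≥0∞) ^ 2) (x := t)
          simp_rw [e1]
          rw [lintegral_add_right_eq_self (fun u => ((I j).indicator
            (fun u => (‖f u‖₊ : ℝ≥0∞) ^ 2)) u) (T * d j)]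
          exact lintegral_indicator measurableSet_Icc _
      _ = ∫⁻ t in ⋃ j, I j, (‖f t‖₊ : ℝ≥0∞) ^ 2 := by
          rw [lintegral_iUnion (fun j => measurableSet_Icc) hId, tsum_fintype]
      _ = l2sq1 f := by
          unfold l2sq1
          rw [← lintegral_indicator (MeasurableSet.iUnion fun j => measurableSet_Icc)]
          refine lintegral_congr_ae ?_
          filter_upwards [hsupp] with t ht
          by_cases hmem : t ∈ ⋃ j, I j
          · rw [Set.indicator_of_mem hmem]
          · simp [hmem, ht hmem]
  · -- support
    intro t hnot
    simp only [hg]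
    exact Finset.sum_eq_zero fun j _ => Set.indicator_of_notMem (hnot j) _
  · -- Fourier transforms agree on b * k
    intro k
    set ξ : ℝ := b * k with hξ
    set e : ℝ → ℂ := fun t => Complex.exp (-2 * (π : ℂ) * Complex.I * ((ξ * t : ℝ) : ℂ)) with he
    have hecont : Continuous e := by
      rw [he]
      fun_prop
    have heunit : ∀ t, ‖e t‖ = 1 := fun t => exp_unit _
    have heshift : ∀ j : Fin M, ∀ t : ℝ, e (t + T * d j) = e t := by
      intro j t
      rw [he]
      simp only
      rw [show ((ξ * (t + T * d j) : ℝ) : ℂ) = ((ξ * t : ℝ) : ℂ) + ((ξ * (T * d j) : ℝ) : ℂ) by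
        push_cast; ring]
      rw [mul_add, Complex.exp_add]
      have : ((ξ * (T * d j) : ℝ) : ℂ) = (((k * d j : ℤ) : ℝ) : ℂ) := by
        push_cast
        rw [hξ]
        push_cast
        calc (b:ℂ) * (k:ℂ) * ((T:ℂ) * (d j : ℂ)) = ((b*T :ℝ):ℂ) * ((k : ℂ) * (d j:ℂ)) := by
              push_cast; ring
        _ = (k : ℂ) * (d j : ℂ) := by rw [hbT]; push_cast; rw [one_mul]
      rw [this, exp_int, mul_one]
    have hIf : ∀ j : Fin M, IntegrableOn f (I j) volume :=
      fun j => integrableOn_Icc_of_l2 hsm.aestronglyMeasurable hfin _ _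
    have hH : ∀ j : Fin M, IntegrableOn (fun u => e u * f u) (I j) volume := by
      intro j
      exact Integrable.bdd_mul (c := 1) (hIf j) (hecont.aestronglyMeasurable.restrict)
        (Filter.Eventually.of_forall fun t => le_of_eq (heunit t))
    have e1 : ∀ j : Fin M, ∀ t : ℝ, (J j).indicator (fun t => e t * f (t + T * d j)) t
        = ((I j).indicator (fun u => e u * f u)) (t + T * d j) := by
      intro j t
      rw [← hpre j, ← Set.indicator_comp_right (fun t : ℝ => t + T * (d j : ℝ))
        (s := I j) (g := fun u => e u * f u) (x := t)]
      by_cases hmem : t ∈ (fun t : ℝ => t + T * (d j : ℝ)) ⁻¹' I j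
      · rw [Set.indicator_of_mem hmem, Set.indicator_of_mem hmem]
        simp only [Function.comp_apply]
        rw [heshift j t]
      · rw [Set.indicator_of_notMem hmem, Set.indicator_of_notMem hmem]
    have hJint : ∀ j : Fin M, Integrable
        ((J j).indicator fun t => e t * f (t + T * d j)) volume := by
      intro j
      have h1 : Integrable ((I j).indicator (fun u => e u * f u)) volume :=
        (integrable_indicator_iff measurableSet_Icc).mpr (hH j)
      have h2 := h1.comp_add_right (T * (d j : ℝ))
      exact h2.congr (Filter.Eventually.of_forall fun t => (e1 j t).symm)
    have expand : ∀ t : ℝ, e t * g t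
        = ∑ j, (J j).indicator (fun t => e t * f (t + T * d j)) t := by
      intro t
      rw [hg, Finset.mul_sum]
      refine Finset.sum_congr rfl fun j _ => ?_
      by_cases hmem : t ∈ J j
      · rw [Set.indicator_of_mem hmem, Set.indicator_of_mem hmem]
      · rw [Set.indicator_of_notMem hmem, Set.indicator_of_notMem hmem, mul_zero]
    calc Ft1 g (b * k) = ∫ t, e t * g t := by rw [Ft1]
      _ = ∑ j, ∫ t, (J j).indicator (fun t => e t * f (t + T * d j)) t := by
          rw [integral_congr_ae (Filter.Eventually.of_forall expand)]
          exact integral_finset_sum _ fun j _ => hJint j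
      _ = ∑ j, ∫ t in I j, e t * f t := by
          refine Finset.sum_congr rfl fun j _ => ?_
          simp_rw [e1 j]
          rw [integral_add_right_eq_self (fun u => ((I j).indicator
            (fun u => e u * f u)) u) (T * (d j : ℝ))]
          exact integral_indicator measurableSet_Icc
      _ = ∫ t in ⋃ j, I j, e t * f t := by
          rw [integral_iUnion (fun j => measurableSet_Icc) hId
            (integrableOn_finite_iUnion.mpr hH), tsum_fintype]
      _ = Ft1 f (b * k) := by
          rw [Ft1]
          exact setIntegral_eq_integral_of_ae_compl_eq_zero
            (by filter_upwards [hsupp] with t ht htmem; rw [ht htmem, mul_zero])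

lemma lint_sum_dirac (b : ℝ) (φ : ℝ → ℝ≥0∞) :
    ∫⁻ ξ, φ ξ ∂(Measure.sum fun k : ℤ => Measure.dirac (b * k)) = ∑' k : ℤ, φ (b * k) := by
  rw [lintegral_sum_measure]
  exact tsum_congr fun k => lintegral_dirac _ _

lemma lattice_gap {T : ℝ} (hT : 0 < T) (cd : ℝ) (h : ∀ n : ℤ, cd ≠ n * T) :
    0 < min (T/2) |cd - round (cd/T) * T| ∧
      ∀ n : ℤ, min (T/2) |cd - round (cd/T) * T| ≤ |cd - n * T| := by
  constructor
  · refine lt_min (by linarith) ?_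
    rw [abs_pos, sub_ne_zero]
    exact h (round (cd/T))
  · intro n
    by_cases hn : n = round (cd/T)
    · rw [hn]
      exact min_le_right _ _
    · refine le_trans (min_le_left _ _) ?_
      have h1 : |cd/T - (round (cd/T) : ℤ)| ≤ 1/2 := abs_sub_round _
      have h2 : (1:ℝ) ≤ |(n:ℝ) - ((round (cd/T) : ℤ) : ℝ)| := by
        exact_mod_cast Int.one_le_abs (sub_ne_zero.mpr hn)
      have h3 : |(n:ℝ) - ((round (cd/T) : ℤ) : ℝ)|
          ≤ |(n:ℝ) - cd/T| + |cd/T - ((round (cd/T) : ℤ) : ℝ)| := abs_sub_le _ _ _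
      have h4 : 1/2 ≤ |cd/T - n| := by
        rw [abs_sub_comm]
        linarith
      have h5 : cd - n * T = T * (cd/T - n) := by
        field_simp
      rw [h5, abs_mul, abs_of_pos hT]
      nlinarith [abs_nonneg (cd/T - (n:ℝ))]

lemma lift_mem {T c xx γ : ℝ} (hT : 0 < T) (hγ : 0 < γ) (hγT : γ ≤ T)
    (h : ∀ n : ℤ, γ/2 ≤ |xx - c - n * T|) :
    c + γ/2 ≤ xx - T * ⌊(xx - c)/T⌋ ∧ xx - T * ⌊(xx - c)/T⌋ ≤ c + T - γ/2 := by
  set n : ℤ := ⌊(xx - c)/T⌋ with hn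
  have h0 : (n:ℝ) ≤ (xx - c)/T := Int.floor_le _
  have h1 : (xx - c)/T < n + 1 := Int.lt_floor_add_one _
  have hw0 : 0 ≤ xx - c - n * T := by
    have := mul_le_mul_of_nonneg_left h0 hT.le
    rw [mul_div_cancel₀ _ hT.ne'] at this
    linarith [this]
  have hw1 : xx - c - n * T < T := by
    have := mul_lt_mul_of_pos_left h1 hT
    rw [mul_div_cancel₀ _ hT.ne'] at this
    nlinarith
  have ha : γ/2 ≤ xx - c - n * T := by
    have := h n
    rw [_root_.abs_of_nonneg hw0] at this
    exact this
  have hb : γ/2 ≤ T - (xx - c - n * T) := by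
    have h2 := h (n + 1)
    have h3 : xx - c - ((n : ℤ) + 1 : ℤ) * T = (xx - c - n * T) - T := by
      push_cast
      ring
    rw [h3, _root_.abs_of_nonpos (by linarith)] at h2
    linarith
  constructor
  · linarith
  · linarith

lemma pos_dir (s : ℕ) (a : Fin s → ℝ) (b : ℝ) (hb : 0 < b)
    (hq : ¬ ∃ q : Fin s → ℚ, (1 : ℝ) / b = ∑ i, (q i : ℝ) * a i) :
    UniformFrame (Measure.sum fun k : ℤ => Measure.dirac (b * k)) (Gset s a)
      (1 / b) (1 / b) := by
  intro M x hxG hinj δ hδ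
  set T : ℝ := 1 / b with hTdef
  have hT : 0 < T := by positivity
  have hbT : b * T = 1 := by
    rw [hTdef]
    field_simp
  -- distinctness mod T
  have hsep : ∀ j j' : Fin M, j ≠ j' → ∀ n : ℤ, x j - x j' ≠ n * T := by
    intro j j' hne n heq
    by_cases hn : n = 0
    · rw [hn] at heq
      push_cast at heq
      rw [zero_mul] at heq
      exact hne (hinj (by linarith))
    · obtain ⟨m, hm⟩ := hxG j
      obtain ⟨m', hm'⟩ := hxG j'
      have hn' : ((n:ℝ)) ≠ 0 := Int.cast_ne_zero.mpr hn
      refine hq ⟨fun i => ((m i - m' i : ℤ) : ℚ) / (n : ℚ), ?_⟩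
      have key : ∑ i, ((((m i - m' i : ℤ) : ℚ) / (n : ℚ) : ℚ) : ℝ) * a i
          = (x j - x j') / n := by
        calc ∑ i, ((((m i - m' i : ℤ) : ℚ) / (n : ℚ) : ℚ) : ℝ) * a i
            = ∑ i, ((m i : ℝ) * a i - (m' i : ℝ) * a i) / n :=
              Finset.sum_congr rfl fun i _ => by push_cast; ring
          _ = (∑ i, ((m i : ℝ) * a i - (m' i : ℝ) * a i)) / n := by
              rw [Finset.sum_div]
          _ = (x j - x j') / n := by
              rw [Finset.sum_sub_distrib, ← hm, ← hm']
      rw [key, heq, mul_div_cancel_left₀ _ hn']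
  rcases Nat.eq_zero_or_pos M with hM | hM
  · -- no points at all
    subst hM
    refine ⟨1, one_pos, ?_, ?_⟩
    · intro j
      exact j.elim0
    · intro f hf
      obtain ⟨hae, hfin, hsupp⟩ := hf
      have hzero : ∀ᵐ t : ℝ, f t = 0 := by
        filter_upwards [hsupp] with t ht
        exact ht (by simp)
      have hFt : ∀ ξ, Ft1 f ξ = 0 := by
        intro ξ
        rw [Ft1]
        rw [integral_congr_ae (g := fun _ => (0:ℂ))
          (by filter_upwards [hzero] with t ht; rw [ht, mul_zero])]
        exact integral_zero _ _
      have hl2 : l2sq1 f = 0 := by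
        rw [l2sq1]
        rw [lintegral_congr_ae (g := fun _ => (0:ℝ≥0∞))
          (by filter_upwards [hzero] with t ht; rw [ht]; simp)]
        exact lintegral_zero
      have hint : (∫⁻ ξ, (‖Ft1 f ξ‖₊ : ℝ≥0∞) ^ 2
          ∂(Measure.sum fun k : ℤ => Measure.dirac (b * k))) = 0 := by
        simp [hFt]
      simp [hint, hl2]
  · -- at least one point
    obtain ⟨j₀⟩ : Nonempty (Fin M) := ⟨⟨0, hM⟩⟩
    classical
    set Γ : Fin M × Fin M → ℝ := fun p =>
      if p.1 = p.2 then T/2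
      else min (T/2) |(x p.1 - x p.2) - round ((x p.1 - x p.2)/T) * T| with hΓ
    have hΓpos : ∀ p : Fin M × Fin M, 0 < Γ p := by
      intro p
      by_cases hp : p.1 = p.2
      · simp only [hΓ, if_pos hp]
        linarith
      · simp only [hΓ, if_neg hp]
        exact (lattice_gap hT _ (hsep p.1 p.2 hp)).1
    have hΓbound : ∀ p : Fin M × Fin M, p.1 ≠ p.2 → ∀ n : ℤ,
        Γ p ≤ |x p.1 - x p.2 - n * T| := by
      intro p hp n
      simp only [hΓ, if_neg hp]
      exact (lattice_gap hT _ (hsep p.1 p.2 hp)).2 n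
    haveI : Nonempty (Fin M × Fin M) := ⟨(j₀, j₀)⟩
    set γ : ℝ := Finset.univ.inf' (Finset.univ_nonempty (α := Fin M × Fin M)) Γ with hγdef
    have hγpos : 0 < γ := by
      rw [hγdef, Finset.lt_inf'_iff]
      exact fun p _ => hΓpos p
    have hγle : γ ≤ T/2 := by
      refine le_trans (Finset.inf'_le Γ (Finset.mem_univ (j₀, j₀))) ?_
      simp [hΓ]
    have hγsep : ∀ j j' : Fin M, j ≠ j' → ∀ n : ℤ, γ ≤ |x j - x j' - n * T| := by
      intro j j' hne n
      refine le_trans (Finset.inf'_le Γ (Finset.mem_univ (j, j'))) (hΓbound (j, j') hne n)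
    set ε : ℝ := γ/2 with hεdef
    have hε : 0 < ε := by rw [hεdef]; linarith
    set c : ℝ := x j₀ - γ/2 with hcdef
    have hcsep : ∀ j : Fin M, ∀ n : ℤ, γ/2 ≤ |x j - c - n * T| := by
      intro j n
      by_cases hj : j = j₀
      · subst hj
        rw [hcdef, show x j - (x j - γ/2) - n * T = γ/2 - n * T by ring]
        by_cases hn : n = 0
        · subst hn
          rw [Int.cast_zero, zero_mul, sub_zero, _root_.abs_of_pos (by linarith)]
        · have hnT : T ≤ |(n:ℝ) * T| := by
            rw [abs_mul, _root_.abs_of_pos hT]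
            have : (1:ℝ) ≤ |(n:ℝ)| := by exact_mod_cast Int.one_le_abs hn
            nlinarith
          have := abs_sub_abs_le_abs_sub ((n:ℝ) * T) (γ/2)
          rw [_root_.abs_of_pos (by linarith : (0:ℝ) < γ/2)] at this
          calc γ/2 ≤ T - γ/2 := by linarith
            _ ≤ |(n:ℝ) * T| - γ/2 := by linarith
            _ ≤ |(n:ℝ) * T - γ/2| := this
            _ = |γ/2 - n * T| := by rw [abs_sub_comm]
      · have h1 := hγsep j j₀ hj n
        have h2 : x j - c - n * T = (x j - x j₀ - n * T) + γ/2 := by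
          rw [hcdef]; ring
        rw [h2]
        calc γ/2 = γ - γ/2 := by ring
          _ ≤ |x j - x j₀ - n * T| - |(γ/2 : ℝ)| := by
              rw [_root_.abs_of_pos (by linarith : (0:ℝ) < γ/2)]
              linarith
          _ ≤ |x j - x j₀ - n * T + γ/2| := by
              have := abs_add_le (x j - x j₀ - n * T + γ/2) (-(γ/2))
              simp only [add_neg_cancel_right] at this
              rw [abs_neg] at this
              linarith
    set d : Fin M → ℤ := fun j => ⌊(x j - c)/T⌋ with hddef
    set y : Fin M → ℝ := fun j => x j - T * d j with hydef
    have hybounds : ∀ j, c + γ/2 ≤ y j ∧ y j ≤ c + T - γ/2 := by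
      intro j
      exact lift_mem hT hγpos (by linarith) (hcsep j)
    have hysep : ∀ j j' : Fin M, j ≠ j' → γ ≤ |y j - y j'| := by
      intro j j' hne
      have h1 := hγsep j j' hne (d j - d j')
      have h2 : y j - y j' = x j - x j' - ((d j - d j' : ℤ) : ℝ) * T := by
        rw [hydef]
        push_cast
        ring
      rw [← h2] at h1
      exact h1
    have hxsep : ∀ j j' : Fin M, j ≠ j' → γ ≤ |x j - x j'| := by
      intro j j' hne
      have h1 := hγsep j j' hne 0
      rw [Int.cast_zero, zero_mul, sub_zero] at h1
      exact h1
    -- the intervals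
    have himg : ∀ j, (x j + ·) '' QI ε = Set.Icc (x j - ε/2) (x j + ε/2) := by
      intro j
      rw [QI, Set.image_const_add_Icc, ← sub_eq_add_neg]
    have hIccdisj : ∀ (z : Fin M → ℝ), (∀ j j' : Fin M, j ≠ j' → γ ≤ |z j - z j'|) →
        Pairwise (Function.onFun Disjoint fun j => Set.Icc (z j - ε/2) (z j + ε/2)) := by
      intro z hz j j' hne
      have h1 := hz j j' hne
      simp only [Function.onFun]
      rw [Set.disjoint_left]
      intro t ht ht'
      simp only [Set.mem_Icc] at ht ht'
      rw [hεdef] at ht ht'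
      rcases abs_cases (z j - z j') with ⟨heq, _⟩ | ⟨heq, _⟩
      · rw [heq] at h1
        linarith [ht.1, ht.2, ht'.1, ht'.2]
      · rw [heq] at h1
        linarith [ht.1, ht.2, ht'.1, ht'.2]
    have hIdisj := hIccdisj x hxsep
    have hJdisj := hIccdisj y hysep
    refine ⟨ε, hε, ?_, ?_⟩
    · intro j j' hne
      simp only [Function.onFun]
      rw [himg j, himg j']
      exact hIdisj hne
    · intro f hf
      obtain ⟨hae, hfin, hsupp⟩ := hf
      -- replace f by a strongly measurable representative
      set f' : ℝ → ℂ := hae.mk f with hf'def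
      have hf'sm : StronglyMeasurable f' := hae.stronglyMeasurable_mk
      have hff' : f =ᵐ[volume] f' := hae.ae_eq_mk
      have hl2f : l2sq1 f = l2sq1 f' := by
        apply lintegral_congr_ae
        filter_upwards [hff'] with t ht
        rw [ht]
      have hFtf : ∀ ξ, Ft1 f ξ = Ft1 f' ξ := by
        intro ξ
        apply integral_congr_ae
        filter_upwards [hff'] with t ht
        rw [ht]
      have hfin' : l2sq1 f' < ⊤ := by rw [← hl2f]; exact hfin
      have hsupp' : ∀ᵐ t : ℝ, t ∉ (⋃ j, Set.Icc (x j - ε/2) (x j + ε/2)) → f' t = 0 := by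
        filter_upwards [hff', hsupp] with t ht h2 hmem
        rw [← ht]
        apply h2
        rw [show (⋃ j, (x j + ·) '' QI ε) = ⋃ j, Set.Icc (x j - ε/2) (x j + ε/2) from
          Set.iUnion_congr himg]
        exact hmem
      obtain ⟨g, hgsm, hgl2, hgsupp, hgFt⟩ := transfer x y d T ε b hε hT hbT
        (fun j => rfl) hJdisj f' hf'sm hfin' hsupp' hIdisj
      have hgsuppIoc : ∀ t, t ∉ Set.Ioc c (c + 1/b) → g t = 0 := by
        intro t ht
        refine hgsupp t fun j => fun hmem => ht ?_
        simp only [Set.mem_Icc] at hmem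
        have hy := hybounds j
        rw [Set.mem_Ioc, ← hTdef]
        clear_value T γ ε c d y
        constructor
        · have h5 : c + γ/2 - ε/2 ≤ t := by linarith [hy.1, hmem.1]
          rw [hεdef] at h5
          linarith [hγpos, h5]
        · have h5 : t ≤ c + T - γ/2 + ε/2 := by linarith [hy.2, hmem.2]
          rw [hεdef] at h5
          linarith [hγpos, h5]
      have hgfin : l2sq1 g < ⊤ := by rw [hgl2]; exact hfin'
      have hpars := parseval_key hb c g hgsm hgfin hgsuppIoc
      have hmain : (∫⁻ ξ, (‖Ft1 f ξ‖₊ : ℝ≥0∞) ^ 2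
          ∂(Measure.sum fun k : ℤ => Measure.dirac (b * k)))
          = ENNReal.ofReal (1/b) * l2sq1 f := by
        rw [lint_sum_dirac]
        calc ∑' k : ℤ, (‖Ft1 f (b * k)‖₊ : ℝ≥0∞) ^ 2
            = ∑' k : ℤ, (‖Ft1 g (b * k)‖₊ : ℝ≥0∞) ^ 2 := by
              refine tsum_congr fun k => ?_
              rw [hFtf, hgFt]
          _ = ENNReal.ofReal (1/b) * l2sq1 g := hpars
          _ = ENNReal.ofReal (1/b) * l2sq1 f := by rw [hgl2, hl2f]
      rw [hmain]
      constructor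
      · exact mul_le_mul_left (ENNReal.ofReal_le_ofReal (by linarith)) _
      · exact mul_le_mul_left (ENNReal.ofReal_le_ofReal (by linarith)) _

lemma neg_dir (s : ℕ) (a : Fin s → ℝ) (b : ℝ) (hb : 0 < b) (A B : ℝ) (hA : 0 < A)
    (hframe : UniformFrame (Measure.sum fun k : ℤ => Measure.dirac (b * k)) (Gset s a) A B)
    (q : Fin s → ℚ) (hq : (1 : ℝ) / b = ∑ i, (q i : ℝ) * a i) : False := by
  classical
  set D : ℕ := ∏ i, (q i).den with hD
  have hDpos : 0 < D := Finset.prod_pos fun i _ => (q i).pos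
  have hint : ∀ i : Fin s, ∃ z : ℤ, (q i * (D:ℚ)) = (z:ℚ) := by
    intro i
    obtain ⟨e, he⟩ := Finset.dvd_prod_of_mem (fun i => (q i).den) (Finset.mem_univ i)
    refine ⟨(q i).num * e, ?_⟩
    rw [hD, he]
    push_cast
    rw [← mul_assoc, Rat.mul_den_eq_num]
  choose m hm using hint
  set x2 : ℝ := (D:ℝ) / b with hx2
  have hx2pos : 0 < x2 := by
    rw [hx2]
    positivity
  set x : Fin 2 → ℝ := ![0, x2] with hx
  have hx0 : x 0 = 0 := rfl
  have hx1 : x 1 = x2 := rfl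
  have hmem : ∀ j, x j ∈ Gset s a := by
    intro j
    fin_cases j
    · exact ⟨fun _ => 0, by simp [hx]⟩
    · refine ⟨m, ?_⟩
      show x2 = _
      have key : ∀ i : Fin s, ((m i : ℝ)) * a i = (D:ℝ) * ((q i : ℝ) * a i) := by
        intro i
        have h1 : ((m i : ℚ) : ℝ) = ((q i * (D:ℚ) : ℚ) : ℝ) := by rw [hm i]
        push_cast at h1
        rw [h1]
        ring
      rw [Finset.sum_congr rfl fun i _ => key i, ← Finset.mul_sum, ← hq, hx2]
      ring
  have hinj : Function.Injective x := by
    intro i j hij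
    have h01 : x 0 ≠ x 1 := by
      rw [hx0, hx1]
      exact hx2pos.ne
    fin_cases i <;> fin_cases j
    · rfl
    · exact absurd hij h01
    · exact absurd hij.symm h01
    · rfl
  obtain ⟨ε, hε, hdisj, hbound⟩ := hframe 2 x hmem hinj (A/2) (half_pos hA)
  set u : Fin 2 → Set ℝ := fun j => Set.Icc (x j - ε/2) (x j + ε/2) with hu
  have himg : ∀ j, (x j + ·) '' QI ε = u j := by
    intro j
    rw [QI, Set.image_const_add_Icc, ← sub_eq_add_neg]
  have hdisj01 : Disjoint (u 0) (u 1) := by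
    have := hdisj (show (0 : Fin 2) ≠ 1 by decide)
    simpa only [Function.onFun, himg 0, himg 1] using this
  set f : ℝ → ℂ := fun t => (u 0).indicator (fun _ => (1:ℂ)) t
      - (u 1).indicator (fun _ => (1:ℂ)) t with hf
  have hfnorm : ∀ t, (‖f t‖₊ : ℝ≥0∞) ^ 2
      = (u 0).indicator (fun _ => (1:ℝ≥0∞)) t + (u 1).indicator (fun _ => (1:ℝ≥0∞)) t := by
    intro t
    by_cases h0 : t ∈ u 0
    · have h1 : t ∉ u 1 := fun h1 => Set.disjoint_left.mp hdisj01 h0 h1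
      simp [hf, Set.indicator_of_mem h0, Set.indicator_of_notMem h1]
    · by_cases h1 : t ∈ u 1
      · simp [hf, Set.indicator_of_notMem h0, Set.indicator_of_mem h1]
      · simp [hf, Set.indicator_of_notMem h0, Set.indicator_of_notMem h1]
  have hl2 : l2sq1 f = ENNReal.ofReal ε + ENNReal.ofReal ε := by
    rw [l2sq1]
    rw [lintegral_congr hfnorm]
    rw [lintegral_add_left ((measurable_const).indicator measurableSet_Icc)]
    rw [lintegral_indicator_const measurableSet_Icc, lintegral_indicator_const measurableSet_Icc]
    simp only [hu, Real.volume_Icc]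
    rw [show x 0 + ε/2 - (x 0 - ε/2) = ε by ring, show x 1 + ε/2 - (x 1 - ε/2) = ε by ring,
      one_mul]
  have hl2fin : l2sq1 f < ⊤ := by
    rw [hl2]
    exact ENNReal.add_lt_top.mpr ⟨ENNReal.ofReal_lt_top, ENNReal.ofReal_lt_top⟩
  have hl2ne : l2sq1 f ≠ 0 := by
    rw [hl2]
    exact (lt_of_lt_of_le (ENNReal.ofReal_pos.mpr hε) le_self_add).ne'
  have hmemf : MemL2On1 f (⋃ j, (x j + ·) '' QI ε) := by
    refine ⟨?_, hl2fin, ?_⟩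
    · exact ((measurable_const.indicator measurableSet_Icc).sub
        (measurable_const.indicator measurableSet_Icc)).aestronglyMeasurable
    · refine Filter.Eventually.of_forall fun t ht => ?_
      have h0 : t ∉ u 0 := fun h => ht (Set.mem_iUnion.mpr ⟨0, by rw [himg 0]; exact h⟩)
      have h1 : t ∉ u 1 := fun h => ht (Set.mem_iUnion.mpr ⟨1, by rw [himg 1]; exact h⟩)
      simp [hf, Set.indicator_of_notMem h0, Set.indicator_of_notMem h1]
  -- the Fourier transform vanishes on the lattice
  have hFt0 : ∀ k : ℤ, Ft1 f (b * k) = 0 := by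
    intro k
    set ξ : ℝ := b * k with hξ
    set e : ℝ → ℂ := fun t => Complex.exp (-2 * (π : ℂ) * Complex.I * ((ξ * t : ℝ) : ℂ)) with he
    have hecont : Continuous e := by
      rw [he]
      fun_prop
    have hint0 : Integrable ((u 0).indicator e) volume :=
      (integrable_indicator_iff measurableSet_Icc).mpr (hecont.integrableOn_Icc)
    have hint1 : Integrable ((u 1).indicator e) volume :=
      (integrable_indicator_iff measurableSet_Icc).mpr (hecont.integrableOn_Icc)
    have expand : ∀ t, e t * f t = (u 0).indicator e t - (u 1).indicator e t := by
      intro t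
      by_cases h0 : t ∈ u 0 <;> by_cases h1 : t ∈ u 1 <;>
        simp [hf, Set.indicator_apply, h0, h1] <;> ring
    have hsplit : Ft1 f ξ = (∫ t, (u 0).indicator e t) - ∫ t, (u 1).indicator e t := by
      rw [Ft1, integral_congr_ae (Filter.Eventually.of_forall expand)]
      exact integral_sub hint0 hint1
    -- shift identity
    have hpre01 : (fun t : ℝ => t + x2) ⁻¹' (u 1) = u 0 := by
      rw [hu]
      simp only [Set.preimage_add_const_Icc]
      rw [hx0, hx1]
      rw [show x2 - ε/2 - x2 = 0 - ε/2 by ring, show x2 + ε/2 - x2 = 0 + ε/2 by ring]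
    have heshift : ∀ t : ℝ, e (t + x2) = e t := by
      intro t
      rw [he]
      simp only
      rw [show ((ξ * (t + x2) : ℝ) : ℂ) = ((ξ * t : ℝ) : ℂ) + ((ξ * x2 : ℝ) : ℂ) by
        push_cast; ring]
      rw [mul_add, Complex.exp_add]
      have hval : (ξ * x2 : ℝ) = ((k * D : ℤ) : ℝ) := by
        rw [hξ, hx2]
        push_cast
        field_simp
      rw [hval, exp_int, mul_one]
    have hshift : (∫ t, (u 1).indicator e t) = ∫ t, (u 0).indicator e t := by
      rw [← integral_add_right_eq_self (fun t => (u 1).indicator e t) x2]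
      refine integral_congr_ae (Filter.Eventually.of_forall fun t => ?_)
      show (u 1).indicator e (t + x2) = (u 0).indicator e t
      by_cases hmem : t ∈ u 0
      · have hmem' : t + x2 ∈ u 1 := by
          rw [← hpre01] at hmem
          exact hmem
        rw [Set.indicator_of_mem hmem' e, Set.indicator_of_mem hmem e, heshift t]
      · have hmem' : t + x2 ∉ u 1 := by
          intro h
          refine hmem ?_
          rw [← hpre01]
          exact h
        rw [Set.indicator_of_notMem hmem' e, Set.indicator_of_notMem hmem e]
    rw [hsplit, hshift, sub_self]
  have hlow := (hbound f hmemf).1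
  have hzero : (∫⁻ ξ, (‖Ft1 f ξ‖₊ : ℝ≥0∞) ^ 2
      ∂(Measure.sum fun k : ℤ => Measure.dirac (b * k))) = 0 := by
    rw [lint_sum_dirac]
    simp [hFt0]
  rw [hzero] at hlow
  have hAA : A - A/2 = A/2 := by ring
  rw [hAA] at hlow
  have : ENNReal.ofReal (A/2) * l2sq1 f ≠ 0 :=
    mul_ne_zero (by simp [ENNReal.ofReal_eq_zero]; linarith) hl2ne
  exact this (le_antisymm hlow zero_le)

end LatAux

theorem lattice_measure_uniform_frame_iff (s : ℕ) (hs : 1 ≤ s)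
    (a : Fin s → ℝ) (ha : ∀ i, 0 < a i) (hind : LinearIndependent ℚ a)
    (b : ℝ) (hb : 0 < b) :
    ((∃ A B : ℝ, 0 < A ∧ 0 < B ∧
        UniformFrame (Measure.sum fun k : ℤ => Measure.dirac (b * k)) (Gset s a) A B) ↔
      ¬ ∃ q : Fin s → ℚ, (1 : ℝ) / b = ∑ i, (q i : ℝ) * a i) ∧
    ((¬ ∃ q : Fin s → ℚ, (1 : ℝ) / b = ∑ i, (q i : ℝ) * a i) →
      UniformFrame (Measure.sum fun k : ℤ => Measure.dirac (b * k)) (Gset s a)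
        (1 / b) (1 / b)) := by

  constructor
  · constructor
    · rintro ⟨A, B, hA, hB, hframe⟩ ⟨q, hq⟩
      exact LatAux.neg_dir s a b hb A B hA hframe q hq
    · intro hq
      exact ⟨1/b, 1/b, by positivity, by positivity, LatAux.pos_dir s a b hb hq⟩
  · intro hq
    exact LatAux.pos_dir s a b hb hq
end
end

section
/- There exists an open set E ⊂ ℝ of finite Lebesgue measure such that for any m ≥ 1 and any real numbers x₁,…,x_m, the intersection E ∩ (E + x₁) ∩ ⋯ ∩ (E + x_m) is nonempty. -/
open MeasureTheory ENNReal

theorem exists_open_set_finite_measure_translates_intersect :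
    ∃ E : Set ℝ, IsOpen E ∧ volume E < ⊤ ∧
      ∀ (m : ℕ) (x : Fin m → ℝ), (E ∩ ⋂ i, (fun e => e + x i) '' E).Nonempty := by
  set q : ℕ → ℝ := fun n => ((Denumerable.ofNat ℚ n : ℚ) : ℝ) with hqdef
  set E : Set ℝ := ⋃ n : ℕ, Set.Ioo (q n - (1/2)^n) (q n + (1/2)^n) with hE
  have hopen : IsOpen E := isOpen_iUnion fun n => isOpen_Ioo
  have hdense : Dense E := by
    have hq : DenseRange q := by
      have h1 : DenseRange ((↑) : ℚ → ℝ) := Rat.denseRange_cast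
      have h2 : Function.Surjective (Denumerable.ofNat ℚ) :=
        (Denumerable.eqv ℚ).symm.surjective
      exact h1.comp h2.denseRange Rat.continuous_coe_real
    refine hq.mono ?_
    rintro _ ⟨n, rfl⟩
    exact Set.mem_iUnion.2 ⟨n, by constructor <;> nlinarith [pow_pos (by norm_num : (0:ℝ) < 1/2) n]⟩
  refine ⟨E, hopen, ?_, ?_⟩
  · calc volume E ≤ ∑' n : ℕ, volume (Set.Ioo (q n - (1/2)^n) (q n + (1/2)^n)) :=
          measure_iUnion_le _
      _ = ∑' n : ℕ, (2 : ℝ≥0∞) * 2⁻¹ ^ n := by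
          refine tsum_congr fun n => ?_
          rw [Real.volume_Ioo]
          have : q n + (1/2)^n - (q n - (1/2)^n) = 2 * (1/2)^n := by ring
          rw [this, ENNReal.ofReal_mul (by norm_num), ENNReal.ofReal_pow (by norm_num),
            show (1/2:ℝ) = (2:ℝ)⁻¹ by norm_num, ENNReal.ofReal_inv_of_pos (by norm_num)]
          norm_num
      _ = 2 * (1 - 2⁻¹)⁻¹ := by rw [ENNReal.tsum_mul_left, ENNReal.tsum_geometric]
      _ < ⊤ := by rw [ENNReal.one_sub_inv_two, inv_inv]; norm_num
  · intro m x
    have hio : ∀ i : Fin m, IsOpen ((fun e => e + x i) '' E) := fun i =>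
      (Homeomorph.addRight (x i)).isOpenMap E hopen
    have hid : ∀ i : Fin m, Dense ((fun e => e + x i) '' E) := fun i =>
      (Homeomorph.addRight (x i)).surjective.denseRange.dense_image (Homeomorph.addRight (x i)).continuous hdense
    have hI : Dense (⋂ i, (fun e => e + x i) '' E) := dense_iInter_of_isOpen hio hid
    exact (hdense.inter_of_isOpen_left hI hopen).nonempty
end
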